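/- (Theorem 1, variance formula.) Let Y¹, Y⁰, Yᵃ, Yᵇ be mutually independent random variables, each exponentially distributed with rate 1. Let τ¹ be the honest random time on [s,t] associated with the intensity λ1 and driven by Y¹, and let τ⁰, τ⁰ₐ, τ⁰ᵦ be the honest random times on [s,t] associated with the intensity λ0 and driven by Y⁰, Yᵃ, Yᵇ respectively. Then Var(exp(-∫_{τ¹}^t λ0(u) du)) = P(max(τ⁰ₐ, τ⁰ᵦ) ≤ τ¹) - P(τ⁰ ≤ τ¹)². -/

import Mathlib

open MeasureTheory ProbabilityTheory Real
open scoped ENNReal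

/-- The honest random time on `[s,t]` associated with the intensity `lam`,
driven by the value `y`: `max (s, inf {r ∈ [s,t] : ∫_r^t lam ≤ y})`. -/
noncomputable def honestTime (s t : ℝ) (lam : ℝ → ℝ) (y : ℝ) : ℝ :=
  max s (sInf {r | r ∈ Set.Icc s t ∧ ∫ u in r..t, lam u ≤ y})

section Aux

lemma honestTime_mem_Icc {s t : ℝ} (lam : ℝ → ℝ) (hs : 0 ≤ s) (hst : s ≤ t) (y : ℝ) :
    honestTime s t lam y ∈ Set.Icc s t := by
  refine ⟨le_max_left _ _, max_le hst ?_⟩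
  set S := {r | r ∈ Set.Icc s t ∧ ∫ u in r..t, lam u ≤ y} with hS
  rcases S.eq_empty_or_nonempty with h | ⟨r, hr⟩
  · rw [h, Real.sInf_empty]; linarith
  · exact le_trans (csInf_le ⟨s, fun z hz => hz.1.1⟩ hr) hr.1.2

lemma integral_antitone_on {s t : ℝ} {lam : ℝ → ℝ} (hlam : Continuous lam)
    (hnn : ∀ u ∈ Set.Icc s t, 0 ≤ lam u) {a b : ℝ} (ha : a ∈ Set.Icc s t)
    (hb : b ∈ Set.Icc s t) (hab : a ≤ b) :
    ∫ u in b..t, lam u ≤ ∫ u in a..t, lam u := by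
  have h1 : (∫ u in a..b, lam u) + ∫ u in b..t, lam u = ∫ u in a..t, lam u :=
    intervalIntegral.integral_add_adjacent_intervals (hlam.intervalIntegrable a b)
      (hlam.intervalIntegrable b t)
  have h2 : 0 ≤ ∫ u in a..b, lam u := by
    apply intervalIntegral.integral_nonneg hab
    intro u hu
    exact hnn u ⟨le_trans ha.1 hu.1, le_trans hu.2 hb.2⟩
  linarith

lemma integral_nonneg_tail {s t : ℝ} {lam : ℝ → ℝ}
    (hnn : ∀ u ∈ Set.Icc s t, 0 ≤ lam u) {x : ℝ} (hx : x ∈ Set.Icc s t) :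
    0 ≤ ∫ u in x..t, lam u := by
  apply intervalIntegral.integral_nonneg hx.2
  intro u hu
  exact hnn u ⟨le_trans hx.1 hu.1, hu.2⟩

lemma honestTime_le_iff {s t : ℝ} {lam : ℝ → ℝ} (hst : s ≤ t)
    (hlam : Continuous lam) (hnn : ∀ u ∈ Set.Icc s t, 0 ≤ lam u)
    {y x : ℝ} (hy : 0 ≤ y) (hx : x ∈ Set.Icc s t) :
    honestTime s t lam y ≤ x ↔ ∫ u in x..t, lam u ≤ y := by
  set S := {r | r ∈ Set.Icc s t ∧ ∫ u in r..t, lam u ≤ y} with hSdef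
  have hbdd : BddBelow S := ⟨s, fun z hz => hz.1.1⟩
  have hne : S.Nonempty := ⟨t, ⟨⟨hst, le_refl t⟩, by simp [intervalIntegral.integral_same, hy]⟩⟩
  have hF : Continuous (fun x : ℝ => ∫ u in x..t, lam u) := by
    have := intervalIntegral.continuous_primitive (μ := volume)
      (fun a b => hlam.intervalIntegrable a b) t
    have heq : (fun x : ℝ => ∫ u in x..t, lam u) = fun x => -∫ u in t..x, lam u := by
      funext x; exact intervalIntegral.integral_symm t x
    rw [heq]; exact this.neg
  have hSclosed : IsClosed S := by
    have : S = Set.Icc s t ∩ (fun x : ℝ => ∫ u in x..t, lam u) ⁻¹' Set.Iic y := rfl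
    rw [this]
    exact isClosed_Icc.inter (IsClosed.preimage hF isClosed_Iic)
  constructor
  · intro h
    have hmem : sInf S ∈ S := hSclosed.csInf_mem hne hbdd
    have h1 : sInf S ≤ x := le_trans (le_max_right s _) h
    exact le_trans (integral_antitone_on hlam hnn hmem.1 hx h1) hmem.2
  · intro h
    have hxS : x ∈ S := ⟨hx, h⟩
    exact max_le hx.1 (csInf_le hbdd hxS)

lemma honestTime_max_antitone {s t : ℝ} (lam : ℝ → ℝ) (hst : s ≤ t) :
    Antitone (fun y => honestTime s t lam (max y 0)) := by
  intro y1 y2 h12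
  simp only [honestTime]
  apply max_le_max (le_refl s)
  have hne : {r | r ∈ Set.Icc s t ∧ ∫ u in r..t, lam u ≤ max y1 0}.Nonempty :=
    ⟨t, ⟨⟨hst, le_refl t⟩, by simp [intervalIntegral.integral_same, le_max_right]⟩⟩
  refine csInf_le_csInf ⟨s, fun z hz => hz.1.1⟩ hne ?_
  intro r hr
  exact ⟨hr.1, le_trans hr.2 (max_le_max h12 (le_refl 0))⟩

lemma expMeasure_withDensity : expMeasure 1 = volume.withDensity (exponentialPDF 1) := rfl

lemma expMeasure_Iio_zero : expMeasure 1 (Set.Iio 0) = 0 := by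
  rw [expMeasure_withDensity, withDensity_apply _ measurableSet_Iio]
  exact lintegral_exponentialPDF_of_nonpos le_rfl

lemma expMeasure_Ici {a : ℝ} (ha : 0 ≤ a) :
    expMeasure 1 (Set.Ici a) = ENNReal.ofReal (Real.exp (-a)) := by
  have hprob : IsProbabilityMeasure (expMeasure 1) := isProbabilityMeasure_expMeasure one_pos
  have hIio : expMeasure 1 (Set.Iio a) = ENNReal.ofReal (1 - Real.exp (-a)) := by
    rw [expMeasure_withDensity, withDensity_apply _ measurableSet_Iio,
      setLIntegral_congr Iio_ae_eq_Iic, lintegral_exponentialPDF_eq_antiDeriv one_pos, if_pos ha,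
      one_mul]
  have hcompl : Set.Ici a = (Set.Iio a)ᶜ := by simp
  rw [hcompl, measure_compl measurableSet_Iio (measure_ne_top _ _), measure_univ, hIio]
  rw [show (1 : ℝ≥0∞) = ENNReal.ofReal 1 by simp, ← ENNReal.ofReal_sub _ (by
    have : Real.exp (-a) ≤ 1 := Real.exp_le_one_iff.2 (by linarith)
    linarith)]
  norm_num

end Aux

/-- Theorem 1 (variance formula): with `τ¹` the honest time on `[s,t]` associated with `λ₁`
driven by `Y¹`, and `τ⁰, τ⁰ₐ, τ⁰ᵦ` the honest times associated with `λ₀` driven by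
`Y⁰, Yᵃ, Yᵇ`, where `Y¹, Y⁰, Yᵃ, Yᵇ` are mutually independent `Exp(1)` random variables,
`Var(exp (-∫_{τ¹}^t λ₀(u) du)) = P(max (τ⁰ₐ, τ⁰ᵦ) ≤ τ¹) - P(τ⁰ ≤ τ¹)²`. -/
theorem variance_estimator_P00
    {Ω : Type*} [MeasurableSpace Ω] (P : Measure Ω) [IsProbabilityMeasure P]
    (s t : ℝ) (hs : 0 ≤ s) (hst : s < t)
    (lam0 lam1 : ℝ → ℝ) (hlam0 : Continuous lam0) (hlam1 : Continuous lam1)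
    (hlam0_nonneg : ∀ u ∈ Set.Icc s t, 0 ≤ lam0 u)
    (hlam1_nonneg : ∀ u ∈ Set.Icc s t, 0 ≤ lam1 u)
    (Y1 Y0 Ya Yb : Ω → ℝ)
    (hY1 : Measurable Y1) (hY0 : Measurable Y0) (hYa : Measurable Ya) (hYb : Measurable Yb)
    (hY1law : P.map Y1 = expMeasure 1) (hY0law : P.map Y0 = expMeasure 1)
    (hYalaw : P.map Ya = expMeasure 1) (hYblaw : P.map Yb = expMeasure 1)
    (hindep : iIndepFun ![Y1, Y0, Ya, Yb] P) :
    variance (fun ω => Real.exp (-(∫ u in (honestTime s t lam1 (Y1 ω))..t, lam0 u))) P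
      = (P {ω | max (honestTime s t lam0 (Ya ω)) (honestTime s t lam0 (Yb ω))
            ≤ honestTime s t lam1 (Y1 ω)}).toReal
        - ((P {ω | honestTime s t lam0 (Y0 ω) ≤ honestTime s t lam1 (Y1 ω)}).toReal) ^ 2 := by
  have hν : IsProbabilityMeasure (expMeasure 1) := isProbabilityMeasure_expMeasure one_pos
  set ν := expMeasure 1 with hνdef
  -- the function `F` and its measurable antitone composition `f`
  set F : ℝ → ℝ := fun x => ∫ u in x..t, lam0 u with hFdef
  have hFcont : Continuous F := by
    have := intervalIntegral.continuous_primitive (μ := volume)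
      (fun a b => hlam0.intervalIntegrable a b) t
    have heq : F = fun x => -∫ u in t..x, lam0 u := by
      funext x; exact intervalIntegral.integral_symm t x
    rw [heq]; exact this.neg
  set H1 : ℝ → ℝ := fun y => honestTime s t lam1 (max y 0) with hH1def
  have hH1meas : Measurable H1 := (honestTime_max_antitone lam1 hst.le).measurable
  set f : ℝ → ℝ := fun y => F (H1 y) with hfdef
  have hfmeas : Measurable f := hFcont.measurable.comp hH1meas
  have hfnn : ∀ y, 0 ≤ f y := fun y =>
    integral_nonneg_tail hlam0_nonneg (honestTime_mem_Icc lam1 hs hst.le _)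
  -- a.s. nonnegativity of the driving variables
  have haepos : ∀ (Y : Ω → ℝ), Measurable Y → P.map Y = expMeasure 1 →
      ∀ᵐ ω ∂P, 0 ≤ Y ω := by
    intro Y hY hlaw
    rw [ae_iff]
    have : {ω | ¬ 0 ≤ Y ω} = Y ⁻¹' Set.Iio 0 := by
      ext ω; simp [not_le]
    rw [this, ← Measure.map_apply hY measurableSet_Iio, hlaw]
    exact expMeasure_Iio_zero
  have hY1pos := haepos Y1 hY1 hY1law
  have hY0pos := haepos Y0 hY0 hY0law
  have hYapos := haepos Ya hYa hYalaw
  have hYbpos := haepos Yb hYb hYblaw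
  -- the estimator and its measurable version
  set g : Ω → ℝ := fun ω => Real.exp (-(∫ u in (honestTime s t lam1 (Y1 ω))..t, lam0 u))
    with hgdef
  set g' : Ω → ℝ := fun ω => Real.exp (-(f (Y1 ω))) with hg'def
  have hgg' : g =ᵐ[P] g' := by
    filter_upwards [hY1pos] with ω h
    simp only [hgdef, hg'def, hfdef, hH1def, max_eq_left h, hFdef]
  have hg'meas : Measurable g' := Real.measurable_exp.comp (hfmeas.comp hY1).neg
  -- the exponential integrals
  set I1 : ℝ := ∫ y, Real.exp (-(f y)) ∂ν with hI1def
  set I2 : ℝ := ∫ y, Real.exp (-(f y)) ^ 2 ∂ν with hI2def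
  have hI1nn : 0 ≤ I1 := integral_nonneg fun y => (Real.exp_pos _).le
  have hI2nn : 0 ≤ I2 := integral_nonneg fun y => sq_nonneg _
  have hint1 : Integrable (fun y => Real.exp (-(f y))) ν := by
    refine Integrable.mono' (integrable_const 1)
      ((Real.continuous_exp.measurable.comp hfmeas.neg).aestronglyMeasurable) ?_
    filter_upwards with y
    rw [Real.norm_eq_abs, abs_of_pos (Real.exp_pos _)]
    exact Real.exp_le_one_iff.2 (neg_nonpos.2 (hfnn y))
  have hint2 : Integrable (fun y => Real.exp (-(f y)) ^ 2) ν := by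
    refine Integrable.mono' (integrable_const 1)
      (((Real.continuous_exp.measurable.comp hfmeas.neg).pow_const 2).aestronglyMeasurable) ?_
    filter_upwards with y
    rw [Real.norm_eq_abs, abs_of_pos (pow_pos (Real.exp_pos _) 2)]
    have h1 : Real.exp (-(f y)) ≤ 1 := Real.exp_le_one_iff.2 (neg_nonpos.2 (hfnn y))
    nlinarith [Real.exp_pos (-(f y))]
  -- expectations of g and g²
  have hEg : ∫ ω, g ω ∂P = I1 := by
    rw [integral_congr_ae hgg', hI1def, ← hY1law,
      integral_map hY1.aemeasurable]
    exact ((Real.continuous_exp.measurable.comp hfmeas.neg).aestronglyMeasurable)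
  have hEg2 : ∫ ω, g ω ^ 2 ∂P = I2 := by
    have h2 : (fun ω => g ω ^ 2) =ᵐ[P] fun ω => Real.exp (-(f (Y1 ω))) ^ 2 := by
      filter_upwards [hgg'] with ω h; rw [h]
    rw [integral_congr_ae h2, hI2def, ← hY1law,
      integral_map hY1.aemeasurable]
    exact (((Real.continuous_exp.measurable.comp hfmeas.neg).pow_const 2).aestronglyMeasurable)
  -- membership in Icc
  have hτ1 : ∀ ω, honestTime s t lam1 (Y1 ω) ∈ Set.Icc s t := fun ω =>
    honestTime_mem_Icc lam1 hs hst.le _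
  -- Memℒp
  have hgmem : MemLp g 2 P := by
    refine MemLp.of_bound (hg'meas.aestronglyMeasurable.congr hgg'.symm) 1 ?_
    filter_upwards with ω
    rw [hgdef, Real.norm_eq_abs, abs_of_pos (Real.exp_pos _)]
    exact Real.exp_le_one_iff.2 (neg_nonpos.2 (integral_nonneg_tail hlam0_nonneg (hτ1 ω)))
  -- the probability P(τ⁰ ≤ τ¹)
  have hPB : P {ω | honestTime s t lam0 (Y0 ω) ≤ honestTime s t lam1 (Y1 ω)}
      = ENNReal.ofReal I1 := by
    have hBB' : P {ω | honestTime s t lam0 (Y0 ω) ≤ honestTime s t lam1 (Y1 ω)}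
        = P {ω | f (Y1 ω) ≤ Y0 ω} := by
      apply measure_congr
      rw [Filter.eventuallyEq_set]
      filter_upwards [hY0pos, hY1pos] with ω h0 h1
      have hx := hτ1 ω
      have := honestTime_le_iff (s := s) (t := t) (lam := lam0) hst.le hlam0 hlam0_nonneg h0 hx
      simp only [Set.mem_setOf_eq, this, hfdef, hH1def, max_eq_left h1, hFdef]
    rw [hBB']
    have hi : IndepFun Y1 Y0 P := hindep.indepFun (show (0 : Fin 4) ≠ 1 by decide)
    have hmap : P.map (fun ω => (Y1 ω, Y0 ω)) = ν.prod ν := by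
      rw [(indepFun_iff_map_prod_eq_prod_map_map hY1.aemeasurable hY0.aemeasurable).1 hi,
        hY1law, hY0law]
    have hset : MeasurableSet {p : ℝ × ℝ | f p.1 ≤ p.2} :=
      measurableSet_le (hfmeas.comp measurable_fst) measurable_snd
    have hpre : {ω | f (Y1 ω) ≤ Y0 ω} = (fun ω => (Y1 ω, Y0 ω)) ⁻¹' {p | f p.1 ≤ p.2} := rfl
    rw [hpre, ← Measure.map_apply (hY1.prodMk hY0) hset, hmap, Measure.prod_apply hset]
    have hsec : ∀ x : ℝ, (Prod.mk x ⁻¹' {p : ℝ × ℝ | f p.1 ≤ p.2}) = Set.Ici (f x) := by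
      intro x; rfl
    calc ∫⁻ x, ν (Prod.mk x ⁻¹' {p : ℝ × ℝ | f p.1 ≤ p.2}) ∂ν
        = ∫⁻ x, ENNReal.ofReal (Real.exp (-(f x))) ∂ν := by
          apply lintegral_congr
          intro x
          rw [hsec x, hνdef, expMeasure_Ici (hfnn x)]
      _ = ENNReal.ofReal I1 := by
          rw [hI1def, ofReal_integral_eq_lintegral_ofReal hint1
            (Filter.Eventually.of_forall fun y => (Real.exp_pos _).le)]
  -- the probability P(max(τₐ, τᵦ) ≤ τ¹)
  have hPA : P {ω | max (honestTime s t lam0 (Ya ω)) (honestTime s t lam0 (Yb ω))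
      ≤ honestTime s t lam1 (Y1 ω)} = ENNReal.ofReal I2 := by
    have hAA' : P {ω | max (honestTime s t lam0 (Ya ω)) (honestTime s t lam0 (Yb ω))
        ≤ honestTime s t lam1 (Y1 ω)}
        = P {ω | f (Y1 ω) ≤ Ya ω ∧ f (Y1 ω) ≤ Yb ω} := by
      apply measure_congr
      rw [Filter.eventuallyEq_set]
      filter_upwards [hYapos, hYbpos, hY1pos] with ω ha hb h1
      have hx := hτ1 ω
      have hiffa := honestTime_le_iff (s := s) (t := t) (lam := lam0) hst.le hlam0
        hlam0_nonneg ha hx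
      have hiffb := honestTime_le_iff (s := s) (t := t) (lam := lam0) hst.le hlam0
        hlam0_nonneg hb hx
      simp only [Set.mem_setOf_eq, max_le_iff, hiffa, hiffb, hfdef, hH1def,
        max_eq_left h1, hFdef]
    rw [hAA']
    have hiab : IndepFun Ya Yb P := hindep.indepFun (show (2 : Fin 4) ≠ 3 by decide)
    have hmeas4 : ∀ i, Measurable (![Y1, Y0, Ya, Yb] i) := by
      intro i; fin_cases i <;> simpa using ‹_›
    have hi1ab : IndepFun Y1 (fun ω => (Ya ω, Yb ω)) P :=
      (hindep.indepFun_prodMk hmeas4 2 3 0 (by decide) (by decide)).symm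
    have habmap : P.map (fun ω => (Ya ω, Yb ω)) = ν.prod ν := by
      rw [(indepFun_iff_map_prod_eq_prod_map_map hYa.aemeasurable hYb.aemeasurable).1 hiab,
        hYalaw, hYblaw]
    have hmap : P.map (fun ω => (Y1 ω, (Ya ω, Yb ω))) = ν.prod (ν.prod ν) := by
      have := (indepFun_iff_map_prod_eq_prod_map_map hY1.aemeasurable
        ((hYa.prodMk hYb).aemeasurable)).1 hi1ab
      rw [this, hY1law, habmap]
    have hset : MeasurableSet {p : ℝ × ℝ × ℝ | f p.1 ≤ p.2.1 ∧ f p.1 ≤ p.2.2} := by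
      apply MeasurableSet.inter
      · exact measurableSet_le (hfmeas.comp measurable_fst)
          (measurable_fst.comp measurable_snd)
      · exact measurableSet_le (hfmeas.comp measurable_fst)
          (measurable_snd.comp measurable_snd)
    have hpre : {ω | f (Y1 ω) ≤ Ya ω ∧ f (Y1 ω) ≤ Yb ω}
        = (fun ω => (Y1 ω, (Ya ω, Yb ω))) ⁻¹' {p | f p.1 ≤ p.2.1 ∧ f p.1 ≤ p.2.2} := rfl
    rw [hpre, ← Measure.map_apply (hY1.prodMk (hYa.prodMk hYb)) hset, hmap,
      Measure.prod_apply hset]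
    have hsec : ∀ x : ℝ, (Prod.mk x ⁻¹' {p : ℝ × ℝ × ℝ | f p.1 ≤ p.2.1 ∧ f p.1 ≤ p.2.2})
        = Set.Ici (f x) ×ˢ Set.Ici (f x) := by
      intro x; rfl
    calc ∫⁻ x, (ν.prod ν) (Prod.mk x ⁻¹' {p : ℝ × ℝ × ℝ | f p.1 ≤ p.2.1 ∧ f p.1 ≤ p.2.2}) ∂ν
        = ∫⁻ x, ENNReal.ofReal (Real.exp (-(f x)) ^ 2) ∂ν := by
          apply lintegral_congr
          intro x
          rw [hsec x, Measure.prod_prod, hνdef, expMeasure_Ici (hfnn x),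
            ← ENNReal.ofReal_mul (Real.exp_pos _).le, ← sq]
      _ = ENNReal.ofReal I2 := by
          rw [hI2def, ofReal_integral_eq_lintegral_ofReal hint2
            (Filter.Eventually.of_forall fun y => sq_nonneg _)]
  -- conclusion
  rw [variance_eq_sub hgmem, hPA, hPB, ENNReal.toReal_ofReal hI1nn, ENNReal.toReal_ofReal hI2nn]
  have h1 : ∫ ω, (g ^ 2) ω ∂P = I2 := by
    simp only [Pi.pow_apply]
    exact hEg2
  have h2 : ∫ ω, g ω ∂P = I1 := hEg
  rw [show P[g ^ 2] = I2 from h1, show P[g] = I1 from h2]
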